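/- Let a, b, c_1, c_2, d ∈ I with a < b and c_1 < c_2 < d lexicographically, and suppose A_t(b,c_1) = A_t(a,c_2) = A_t(b,d) = A_t(a,d) = 1. Then it is not possible that type(a,b) = type(c_1,d) and type(c_1,d) = type(c_2,d). -/
import Mathlib


/-- `⟨j_1,…,j_m⟩ = 1 + Σ_{i=1}^m (j_i−1)·k^{m−i}`, the injection `[k]^m → [k^m]`. -/
def ang (k : ℕ) (l : List ℕ) : ℕ := l.foldl (fun acc j => acc * k + (j - 1)) 0 + 1

/-- The vector `v[j_1,…,j_t]`, given by a function `js : ℕ → ℕ` with `js r` being `j_{r+1}`.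
Coordinates are flattened: flat coordinate `i` is coordinate `i % k` (0-indexed) of
block `i / k` (0-indexed).  It is 0 everywhere except at coordinate `j_r` (1-indexed) of
block `r` (1-indexed), where it equals `⟨j_1,…,j_{r−1}⟩`. -/
def vVec (k : ℕ) (js : ℕ → ℕ) (i : ℕ) : ℤ :=
  if i % k + 1 = js (i / k) then (ang k ((List.range (i / k)).map js) : ℤ) else 0

/-- Membership in `I = {1,…,k^t}^{tk}`. -/
def memI (t k : ℕ) (a : Fin (t * k) → ℕ) : Prop := ∀ i, 1 ≤ a i ∧ a i ≤ k ^ t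

/-- Lexicographic (strict) order on tuples. -/
def lexLt {N : ℕ} (a b : Fin N → ℕ) : Prop :=
  ∃ i : Fin N, (∀ j, j < i → a j = b j) ∧ a i < b i

/-- `js` codes an element `(j_1,…,j_t) ∈ [k]^t`. -/
def validJs (t k : ℕ) (js : ℕ → ℕ) : Prop := ∀ r, r < t → 1 ≤ js r ∧ js r ≤ k

/-- The entry `A_t(a,b)` is 1 iff `b − a ∈ S`, i.e. `b − a = v[j_1,…,j_t]` for some
`(j_1,…,j_t) ∈ [k]^t`. -/
def AtOne (t k : ℕ) (a b : Fin (t * k) → ℕ) : Prop :=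
  ∃ js : ℕ → ℕ, validJs t k js ∧
    ∀ i : Fin (t * k), (b i : ℤ) - (a i : ℤ) = vVec k js i.val

/-- `typeOf a b` is the (1-indexed) first block where `a` and `b` differ. -/
noncomputable def typeOf (t k : ℕ) (a b : Fin (t * k) → ℕ) : ℕ :=
  sInf {r | ∃ i : Fin (t * k), i.val / k + 1 = r ∧ a i ≠ b i}

lemma ang_pos (k : ℕ) (l : List ℕ) : 1 ≤ ang k l := Nat.le_add_left 1 _

lemma div_add_mul (k q m : ℕ) (hq : q < k) : (q + m * k) / k = m := by
  rw [Nat.add_mul_div_right _ _ (by omega : 0 < k), Nat.div_eq_of_lt hq, Nat.zero_add]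

lemma mod_add_mul (k q m : ℕ) (hq : q < k) : (q + m * k) % k = q := by
  rw [Nat.add_mul_mod_self_right, Nat.mod_eq_of_lt hq]

lemma vVec_at (k : ℕ) (js : ℕ → ℕ) (m q : ℕ) (hq : q < k) :
    vVec k js (q + m * k) =
      if q + 1 = js m then (ang k ((List.range m).map js) : ℤ) else 0 := by
  unfold vVec
  rw [div_add_mul k q m hq, mod_add_mul k q m hq]

lemma vVec_congr {k m : ℕ} {js js' : ℕ → ℕ} (h : ∀ r, r < m → js r = js' r)
    {i : ℕ} (hi : i / k < m) : vVec k js i = vVec k js' i := by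
  unfold vVec
  rw [h _ hi, List.map_congr_left fun r hr => h r ((List.mem_range.mp hr).trans hi)]

lemma pos_lt {t k m q : ℕ} (hmt : m < t) (hq : q < k) : q + m * k < t * k := by
  have h1 : m * k + k ≤ t * k := by
    calc m * k + k = (m + 1) * k := by ring
    _ ≤ t * k := Nat.mul_le_mul_right k hmt
  omega

lemma agree_of_eq {t k m : ℕ} (hm : m ≤ t)
    {jsP jsM : ℕ → ℕ} (hP : validJs t k jsP) (hM : validJs t k jsM)
    (h0 : ∀ i : Fin (t * k), (i : ℕ) / k < m → vVec k jsP i = vVec k jsM i) :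
    ∀ r, r < m → jsP r = jsM r := by
  intro r hr
  by_contra hne
  have hrt : r < t := lt_of_lt_of_le hr hm
  obtain ⟨h1, h2⟩ := hP r hrt
  have hq : jsP r - 1 < k := by omega
  have hfin : jsP r - 1 + r * k < t * k := pos_lt hrt hq
  have h := h0 ⟨jsP r - 1 + r * k, hfin⟩ (by
    show (jsP r - 1 + r * k) / k < m
    rw [div_add_mul k _ r hq]; exact hr)
  have hco : ((⟨jsP r - 1 + r * k, hfin⟩ : Fin (t * k)) : ℕ) = jsP r - 1 + r * k := rfl
  rw [hco, vVec_at k jsP r _ hq, vVec_at k jsM r _ hq] at h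
  rw [if_pos (by omega), if_neg (by omega)] at h
  have := ang_pos k ((List.range r).map jsP)
  omega

lemma lexLt_trans {N : ℕ} {a b c : Fin N → ℕ} (h1 : lexLt a b) (h2 : lexLt b c) :
    lexLt a c := by
  obtain ⟨i, hi, hi'⟩ := h1
  obtain ⟨j, hj, hj'⟩ := h2
  rcases lt_trichotomy i j with h | h | h
  · exact ⟨i, fun l hl => (hi l hl).trans (hj l (hl.trans h)), by rw [← hj i h]; exact hi'⟩
  · subst h
    exact ⟨i, fun l hl => (hi l hl).trans (hj l hl), hi'.trans hj'⟩
  · exact ⟨j, fun l hl => (hi l (hl.trans h)).trans (hj l hl), by rw [hi j h]; exact hj'⟩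

lemma pair_lemma {t k : ℕ} (hk : 2 ≤ k)
    {x y : Fin (t * k) → ℕ} {jsM jsP : ℕ → ℕ}
    (hM : validJs t k jsM) (hP : validJs t k jsP)
    (hxy : lexLt x y)
    (hv : ∀ i : Fin (t * k), (y i : ℤ) - (x i : ℤ) = vVec k jsP i - vVec k jsM i) :
    ∃ m, m < t ∧ m + 1 = typeOf t k x y ∧ (∀ r, r < m → jsP r = jsM r) ∧
      jsP m < jsM m := by
  obtain ⟨i₀, hpre, hlt⟩ := hxy
  have hk0 : 0 < k := by omega
  have hne : Set.Nonempty {r | ∃ i : Fin (t * k), (i : ℕ) / k + 1 = r ∧ x i ≠ y i} :=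
    ⟨(i₀ : ℕ) / k + 1, i₀, rfl, Nat.ne_of_lt hlt⟩
  have hmem : typeOf t k x y ∈ {r | ∃ i : Fin (t * k), (i : ℕ) / k + 1 = r ∧ x i ≠ y i} :=
    Nat.sInf_mem hne
  obtain ⟨i₁, hi₁, hne₁⟩ := hmem
  set m := (i₁ : ℕ) / k with hm
  have hmt : m < t := (Nat.div_lt_iff_lt_mul hk0).mpr i₁.isLt
  have hmin : ∀ i : Fin (t * k), (i : ℕ) / k < m → x i = y i := by
    intro i hi
    by_contra hne'
    have hle : typeOf t k x y ≤ (i : ℕ) / k + 1 := Nat.sInf_le ⟨i, rfl, hne'⟩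
    omega
  have hvz : ∀ i : Fin (t * k), (i : ℕ) / k < m → vVec k jsP i = vVec k jsM i := by
    intro i hi
    have h1 := hv i
    have h2 := hmin i hi
    rw [h2] at h1
    omega
  have agree : ∀ r, r < m → jsP r = jsM r := agree_of_eq (le_of_lt hmt) hP hM hvz
  have hnePM : jsP m ≠ jsM m := by
    intro heq
    have hcong : vVec k jsP (i₁ : ℕ) = vVec k jsM (i₁ : ℕ) :=
      vVec_congr (m := m + 1)
        (fun r hr => by
          rcases Nat.lt_succ_iff_lt_or_eq.mp hr with h | h
          · exact agree r h
          · rw [h]; exact heq)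
        (by omega)
    have h1 := hv i₁
    rw [hcong] at h1
    exact hne₁ (by omega)
  obtain ⟨hP1, hP2⟩ := hP m hmt
  obtain ⟨hM1, hM2⟩ := hM m hmt
  have hVM : ang k ((List.range m).map jsM) = ang k ((List.range m).map jsP) := by
    rw [List.map_congr_left fun r hr => (agree r (List.mem_range.mp hr)).symm]
  set V : ℕ := ang k ((List.range m).map jsP) with hV
  have hV1 : 1 ≤ V := ang_pos k _
  have hqP : jsP m - 1 < k := by omega
  have hqM : jsM m - 1 < k := by omega
  set iP : Fin (t * k) := ⟨jsP m - 1 + m * k, pos_lt hmt hqP⟩ with hiP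
  set iM : Fin (t * k) := ⟨jsM m - 1 + m * k, pos_lt hmt hqM⟩ with hiM
  have hvP : (y iP : ℤ) - (x iP : ℤ) = (V : ℤ) := by
    have h1 := hv iP
    have hco : (iP : ℕ) = jsP m - 1 + m * k := rfl
    rw [hco, vVec_at k jsP m _ hqP, vVec_at k jsM m _ hqP,
      if_pos (by omega), if_neg (by omega)] at h1
    omega
  have hvM : (y iM : ℤ) - (x iM : ℤ) = -(V : ℤ) := by
    have h1 := hv iM
    have hco : (iM : ℕ) = jsM m - 1 + m * k := rfl
    rw [hco, vVec_at k jsP m _ hqM, vVec_at k jsM m _ hqM,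
      if_neg (by omega), if_pos (by omega), hVM] at h1
    omega
  have hi₀P : (i₀ : ℕ) ≤ (iP : ℕ) := by
    by_contra hcon
    have := hpre iP (by exact lt_of_not_ge hcon)
    rw [this] at hvP
    omega
  have hi₀M : (i₀ : ℕ) ≤ (iM : ℕ) := by
    by_contra hcon
    have := hpre iM (by exact lt_of_not_ge hcon)
    rw [this] at hvM
    omega
  have hge : m ≤ (i₀ : ℕ) / k := by
    by_contra hcon
    exact Nat.ne_of_lt hlt (hmin i₀ (by omega))
  have hle : (i₀ : ℕ) / k ≤ m := by
    have h1 : (i₀ : ℕ) / k ≤ (iP : ℕ) / k := Nat.div_le_div_right hi₀P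
    have h2 : (iP : ℕ) / k = m := div_add_mul k _ m hqP
    omega
  have hdiv : (i₀ : ℕ) / k = m := le_antisymm hle hge
  have hq0 : (i₀ : ℕ) % k < k := Nat.mod_lt _ hk0
  have heq0 : (i₀ : ℕ) = (i₀ : ℕ) % k + m * k := by
    have h := Nat.mod_add_div' (i₀ : ℕ) k
    rw [hdiv] at h
    omega
  have hvi₀ := hv i₀
  rw [heq0, vVec_at k jsP m _ hq0, vVec_at k jsM m _ hq0, hVM] at hvi₀
  have hlt' : 0 < (y i₀ : ℤ) - (x i₀ : ℤ) := by omega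
  have hqP' : (i₀ : ℕ) % k + 1 = jsP m := by
    by_contra hcon
    rw [if_neg hcon] at hvi₀
    by_cases h : (i₀ : ℕ) % k + 1 = jsM m
    · rw [if_pos h] at hvi₀; omega
    · rw [if_neg h] at hvi₀; omega
  have hfin : jsP m < jsM m := by
    have h1 : (iP : ℕ) = jsP m - 1 + m * k := rfl
    have h2 : (iM : ℕ) = jsM m - 1 + m * k := rfl
    have h3 : (i₀ : ℕ) = (iP : ℕ) := by omega
    omega
  exact ⟨m, hmt, hi₁, agree, hfin⟩

theorem stmt6' (t k : ℕ) (ht : 2 ≤ t) (hk : 2 ≤ k)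
    (a b c₁ c₂ d : Fin (t * k) → ℕ)
    (hab : lexLt a b) (h12 : lexLt c₁ c₂) (h2d : lexLt c₂ d)
    (e1 : AtOne t k b c₁) (e2 : AtOne t k a c₂)
    (e3 : AtOne t k b d) (e4 : AtOne t k a d) :
    ¬ (typeOf t k a b = typeOf t k c₁ d ∧ typeOf t k c₁ d = typeOf t k c₂ d) := by
  rintro ⟨hT1, hT2⟩
  obtain ⟨js1, hv1, he1⟩ := e1
  obtain ⟨js2, hv2, he2⟩ := e2
  obtain ⟨js3, hv3, he3⟩ := e3
  obtain ⟨js4, hv4, he4⟩ := e4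
  have h1d : lexLt c₁ d := lexLt_trans h12 h2d
  have hAB : ∀ i : Fin (t * k), (b i : ℤ) - (a i : ℤ) = vVec k js4 i - vVec k js3 i := by
    intro i; have h3 := he3 i; have h4 := he4 i; omega
  have hC2D : ∀ i : Fin (t * k), (d i : ℤ) - (c₂ i : ℤ) = vVec k js4 i - vVec k js2 i := by
    intro i; have h2 := he2 i; have h4 := he4 i; omega
  have hC1D : ∀ i : Fin (t * k), (d i : ℤ) - (c₁ i : ℤ) = vVec k js3 i - vVec k js1 i := by
    intro i; have h1 := he1 i; have h3 := he3 i; omega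
  obtain ⟨m1, hm1t, hm1, A43, L43⟩ := pair_lemma hk hv3 hv4 hab hAB
  obtain ⟨m2, hm2t, hm2, A42, L42⟩ := pair_lemma hk hv2 hv4 h2d hC2D
  obtain ⟨m3, hm3t, hm3, A31, L31⟩ := pair_lemma hk hv1 hv3 h1d hC1D
  have hm31 : m3 = m1 := by omega
  have hm21 : m2 = m1 := by omega
  subst hm31; subst hm21
  set m := m2 with hmdef
  have hdiff : ∀ i : Fin (t * k),
      (c₂ i : ℤ) - (c₁ i : ℤ) =
        vVec k js2 i - vVec k js1 i + vVec k js3 i - vVec k js4 i := by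
    intro i
    have h1 := he1 i; have h2 := he2 i; have h3 := he3 i; have h4 := he4 i
    omega
  obtain ⟨i₀, hpre, hlt⟩ := h12
  obtain ⟨h41, h42⟩ := hv4 m hm1t
  obtain ⟨h31, h32⟩ := hv3 m hm1t
  obtain ⟨h21, h22⟩ := hv2 m hm1t
  obtain ⟨h11, h12'⟩ := hv1 m hm1t
  have hq4 : js4 m - 1 < k := by omega
  set p : Fin (t * k) := ⟨js4 m - 1 + m * k, pos_lt hm1t hq4⟩ with hpdef
  set V : ℕ := ang k ((List.range m).map js4) with hV
  have hV1 : 1 ≤ V := ang_pos k _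
  have hvp : (c₂ p : ℤ) - (c₁ p : ℤ) = -(V : ℤ) := by
    have h1 := hdiff p
    have hco : (p : ℕ) = js4 m - 1 + m * k := rfl
    rw [hco, vVec_at k js2 m _ hq4, vVec_at k js1 m _ hq4, vVec_at k js3 m _ hq4,
      vVec_at k js4 m _ hq4, if_neg (by omega), if_neg (by omega), if_neg (by omega),
      if_pos (by omega)] at h1
    omega
  have hi₀p : (i₀ : ℕ) ≤ (p : ℕ) := by
    by_contra hcon
    have := hpre p (lt_of_not_ge hcon)
    rw [this] at hvp
    omega
  have hi₀ne : (i₀ : ℕ) ≠ (p : ℕ) := by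
    intro heq
    have : i₀ = p := Fin.ext heq
    rw [this] at hlt
    omega
  -- agreements: all four js agree for r < m
  have A21 : ∀ r, r < m → js2 r = js1 r := by
    intro r hr
    rw [← A42 r hr, A43 r hr, A31 r hr]
  have hzero : ∀ i : Fin (t * k), (i : ℕ) / k < m → (c₁ i : ℕ) = c₂ i := by
    intro i hi
    have h1 := hdiff i
    rw [vVec_congr A21 hi, vVec_congr A43 hi] at h1
    omega
  have hge : m ≤ (i₀ : ℕ) / k := by
    by_contra hcon
    exact Nat.ne_of_lt hlt (hzero i₀ (by omega))
  have hle : (i₀ : ℕ) / k ≤ m := by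
    have h1 : (i₀ : ℕ) / k ≤ (p : ℕ) / k := Nat.div_le_div_right hi₀p
    have h2 : (p : ℕ) / k = m := div_add_mul k _ m hq4
    omega
  have hdiv : (i₀ : ℕ) / k = m := le_antisymm hle hge
  have hq0 : (i₀ : ℕ) % k < k := Nat.mod_lt _ (by omega)
  have heq0 : (i₀ : ℕ) = (i₀ : ℕ) % k + m * k := by
    have h := Nat.mod_add_div' (i₀ : ℕ) k
    rw [hdiv] at h
    omega
  have hqlt : (i₀ : ℕ) % k + 1 < js4 m := by
    have hco : (p : ℕ) = js4 m - 1 + m * k := rfl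
    omega
  have h1 := hdiff i₀
  rw [heq0, vVec_at k js2 m _ hq0, vVec_at k js1 m _ hq0, vVec_at k js3 m _ hq0,
    vVec_at k js4 m _ hq0, if_neg (by omega), if_neg (by omega), if_neg (by omega),
    if_neg (by omega)] at h1
  omega

/-- If `a < b`, `c₁ < c₂ < d` and `A_t(b,c₁) = A_t(a,c₂) = A_t(b,d) = A_t(a,d) = 1`,
then it is impossible that `type(a,b) = type(c₁,d) = type(c₂,d)`. -/
theorem stmt6 (t k : ℕ) (ht : 2 ≤ t) (hk : 2 ≤ k)
    (a b c₁ c₂ d : Fin (t * k) → ℕ)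
    (ha : memI t k a) (hb : memI t k b)
    (hc₁ : memI t k c₁) (hc₂ : memI t k c₂) (hd : memI t k d)
    (hab : lexLt a b) (h12 : lexLt c₁ c₂) (h2d : lexLt c₂ d)
    (e1 : AtOne t k b c₁) (e2 : AtOne t k a c₂)
    (e3 : AtOne t k b d) (e4 : AtOne t k a d) :
    ¬ (typeOf t k a b = typeOf t k c₁ d ∧ typeOf t k c₁ d = typeOf t k c₂ d) := by
  exact stmt6' t k ht hk a b c₁ c₂ d hab h12 h2d e1 e2 e3 e4
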